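/- arXiv:1612.05356 — 3 statements merged into one kernel-verified Lean document; each statement's English description precedes it below -/
import Mathlib

section
/- Let W = {x ∈ ℝ^d : Cx ≤ c} be a nonempty compact polyhedron, g : ℝ^n → ℝ differentiable and μ-strongly convex with μ > 0, F(x) = g(Ax) + qᵀx, and W* the (nonempty) set of minimizers of F over W. Suppose there is a constant θ > 0 such that for every x ∈ W, dist(x, W*) ≤ θ‖Ax − r‖, where r is the common value Ax* for x* ∈ W* (Hoffman bound). Then with β = θ², for every x ∈ W and x* = proj_{W*}(x): F(x) − F(x*) ≥ (μ/(2β))‖x − x*‖². -/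
open RealInnerProductSpace Topology

set_option maxHeartbeats 1000000 in
theorem stmt_9 {d n m : ℕ}
    (C : Fin m → EuclideanSpace ℝ (Fin d)) (c : Fin m → ℝ)
    (W : Set (EuclideanSpace ℝ (Fin d)))
    (hWdef : W = {x | ∀ i, ⟪C i, x⟫ ≤ c i})
    (hWne : W.Nonempty) (hWcpt : IsCompact W)
    (g : EuclideanSpace ℝ (Fin n) → ℝ)
    (g' : EuclideanSpace ℝ (Fin n) → EuclideanSpace ℝ (Fin n))
    (hgrad : ∀ z, HasGradientAt g (g' z) z)
    (μ : ℝ) (hμ : 0 < μ)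
    (hsc : ∀ z₁ z₂, g z₁ ≥ g z₂ + ⟪g' z₂, z₁ - z₂⟫ + (μ / 2) * ‖z₁ - z₂‖ ^ 2)
    (A : EuclideanSpace ℝ (Fin d) →ₗ[ℝ] EuclideanSpace ℝ (Fin n))
    (q : EuclideanSpace ℝ (Fin d))
    (F : EuclideanSpace ℝ (Fin d) → ℝ)
    (hF : ∀ x, F x = g (A x) + ⟪q, x⟫)
    (Wstar : Set (EuclideanSpace ℝ (Fin d)))
    (hWstar : Wstar = {x | x ∈ W ∧ ∀ w ∈ W, F x ≤ F w})
    (hWstarne : Wstar.Nonempty)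
    (r : EuclideanSpace ℝ (Fin n)) (hr : ∀ x ∈ Wstar, A x = r)
    (P : EuclideanSpace ℝ (Fin d) → EuclideanSpace ℝ (Fin d))
    (hP : ∀ x, P x ∈ Wstar ∧ ∀ w ∈ Wstar, ‖x - P x‖ ≤ ‖x - w‖)
    (θ : ℝ) (hθ : 0 < θ)
    (hhoffman : ∀ x ∈ W, ‖x - P x‖ ≤ θ * ‖A x - r‖)
    (β : ℝ) (hβ : β = θ ^ 2) :
    ∀ x ∈ W, F x - F (P x) ≥ (μ / (2 * β)) * ‖x - P x‖ ^ 2 := by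
  intro x hx
  have hPx := (hP x).1
  rw [hWstar] at hPx
  obtain ⟨hpW, hpmin⟩ := hPx
  have hrP : A (P x) = r := hr (P x) (hP x).1
  -- convexity of W
  have hWconv : Convex ℝ W := by
    rw [hWdef]
    have heq : {y : EuclideanSpace ℝ (Fin d) | ∀ i, ⟪C i, y⟫ ≤ c i}
        = ⋂ i, {y | ⟪C i, y⟫ ≤ c i} := by ext y; simp
    rw [heq]
    refine convex_iInter fun i => convex_halfSpace_le
      ⟨fun a b => inner_add_right _ _ _, fun t a => real_inner_smul_right _ _ _⟩ _
  set p := P x with hp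
  set v := x - p with hv
  set D : ℝ := ⟪g' (A p), A v⟫ + ⟪q, v⟫ with hD
  -- h has derivative D at 0
  have hderiv : HasDerivAt (fun t : ℝ => F (p + t • v)) D 0 := by
    have h1 : HasDerivAt (fun t : ℝ => A p + t • A v) (A v) 0 := by
      simpa using ((hasDerivAt_id (0:ℝ)).smul_const (A v)).const_add (A p)
    have h2 : HasDerivAt (fun t : ℝ => g (A p + t • A v)) ⟪g' (A p), A v⟫ 0 := by
      have hg := (hgrad (A p)).hasFDerivAt
      have hg' : HasFDerivAt g ((InnerProductSpace.toDual ℝ (EuclideanSpace ℝ (Fin n)))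
          (g' (A p))) (A p + (0:ℝ) • A v) := by simpa using hg
      have := hg'.comp_hasDerivAt (f := fun t : ℝ => A p + t • A v) (0:ℝ) h1
      exact this
    have h3 : HasDerivAt (fun t : ℝ => ⟪q, p + t • v⟫) ⟪q, v⟫ 0 := by
      have : (fun t : ℝ => ⟪q, p + t • v⟫) = fun t : ℝ => ⟪q, p⟫ + t * ⟪q, v⟫ := by
        funext t
        rw [inner_add_right, real_inner_smul_right]
      rw [this]
      simpa using ((hasDerivAt_id (0:ℝ)).mul_const ⟪q, v⟫).const_add ⟪q, p⟫
    have h4 := h2.add h3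
    have heq : (fun t : ℝ => F (p + t • v))
        = fun t : ℝ => g (A p + t • A v) + ⟪q, p + t • v⟫ := by
      funext t
      rw [hF]
      congr 2
      simp [map_add, map_smul]
    rw [heq]
    exact h4
  -- D ≥ 0
  have hD0 : 0 ≤ D := by
    have hslope := hasDerivAt_iff_tendsto_slope.mp hderiv
    have hmono : 𝓝[>] (0:ℝ) ≤ 𝓝[≠] (0:ℝ) :=
      nhdsWithin_mono _ (fun t ht => ne_of_gt ht)
    have htend := hslope.mono_left hmono
    refine ge_of_tendsto htend ?_
    filter_upwards [Ioo_mem_nhdsGT_of_mem (by norm_num : (0:ℝ) ∈ Set.Ico 0 1)] with t ht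
    have hmem : p + t • v ∈ W := by
      have := hWconv hpW hx (by linarith [ht.2] : (0:ℝ) ≤ 1 - t) (le_of_lt ht.1) (by ring)
      have heq : (1 - t) • p + t • x = p + t • v := by
        rw [hv]; module
      rwa [heq] at this
    have hge : F p ≤ F (p + t • v) := hpmin _ hmem
    have : slope (fun t : ℝ => F (p + t • v)) 0 t
        = (F (p + t • v) - F p) / t := by
      simp [slope_def_field]
    rw [this]
    exact div_nonneg (by linarith) (le_of_lt ht.1)
  -- strong convexity step
  have hsc' := hsc (A x) (A p)
  have hAv : A x - A p = A v := by rw [hv, map_sub]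
  have hF1 : F x - F p ≥ D + (μ / 2) * ‖A x - A p‖ ^ 2 := by
    rw [hF x, hF p, hD]
    have : ⟪q, x⟫ - ⟪q, p⟫ = ⟪q, v⟫ := by rw [hv, inner_sub_right]
    have h := hsc'
    rw [hAv] at h ⊢
    linarith [h, this.ge, this.le]
  have key : F x - F p ≥ (μ / 2) * ‖A x - r‖ ^ 2 := by
    rw [← hrP]
    nlinarith [sq_nonneg ‖A x - A p‖]
  -- hoffman
  have hh := hhoffman x hx
  have hnorm : ‖x - p‖ ^ 2 ≤ θ ^ 2 * ‖A x - r‖ ^ 2 := by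
    nlinarith [norm_nonneg (x - p), norm_nonneg (A x - r)]
  have hβpos : 0 < β := by rw [hβ]; positivity
  rw [ge_iff_le, div_mul_eq_mul_div, div_le_iff₀ (by positivity)]
  calc μ * ‖x - p‖ ^ 2 ≤ μ * (θ ^ 2 * ‖A x - r‖ ^ 2) := by nlinarith
    _ = (μ / 2) * ‖A x - r‖ ^ 2 * (2 * β) := by rw [hβ]; ring
    _ ≤ (F x - F p) * (2 * β) := by nlinarith
end

section
/- Under the setup: f_i convex differentiable with L-Lipschitz gradients, F = (1/n)∑ f_i, W ⊆ ℝ^d closed convex, x* a minimizer of F over W, points y, x ∈ W, A a uniformly random b-subset of {1,…,n}, and G = ∇F(x) + (1/b)∑_{i∈A}(∇f_i(y) − ∇f_i(x)). Then E[‖G − ∇F(y)‖²] ≤ α(b)·4L·[F(y) − F(x*) + F(x) − F(x*)], where α(b) = (n−b)/(b(n−1)). -/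
open RealInnerProductSpace
section Lemmas

lemma countA {n b : ℕ} (hb : 1 ≤ b) (i : Fin n) :
    ((Finset.powersetCard b (Finset.univ : Finset (Fin n))).filter (fun S => i ∈ S)).card
      = (n - 1).choose (b - 1) := by
  have h : ((Finset.powersetCard b (Finset.univ : Finset (Fin n))).filter (fun S => i ∈ S)).card
      = (Finset.powersetCard (b - 1) ((Finset.univ : Finset (Fin n)).erase i)).card := by
    refine Finset.card_bij' (fun S _ => S.erase i) (fun T _ => insert i T) ?_ ?_ ?_ ?_
    · intro S hS
      simp only [Finset.mem_filter, Finset.mem_powersetCard] at hS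
      rw [Finset.mem_powersetCard]
      refine ⟨fun x hx => Finset.mem_erase.mpr ⟨(Finset.mem_erase.mp hx).1, Finset.mem_univ x⟩, ?_⟩
      rw [Finset.card_erase_of_mem hS.2, hS.1.2]
    · intro T hT
      rw [Finset.mem_powersetCard] at hT
      have hiT : i ∉ T := fun h => (Finset.mem_erase.mp (hT.1 h)).1 rfl
      simp only [Finset.mem_filter, Finset.mem_powersetCard]
      exact ⟨⟨Finset.subset_univ _, by rw [Finset.card_insert_of_notMem hiT, hT.2]; omega⟩,
        Finset.mem_insert_self i T⟩
    · intro S hS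
      simp only [Finset.mem_filter] at hS
      exact Finset.insert_erase hS.2
    · intro T hT
      rw [Finset.mem_powersetCard] at hT
      have hiT : i ∉ T := fun h => (Finset.mem_erase.mp (hT.1 h)).1 rfl
      exact Finset.erase_insert hiT
  rw [h, Finset.card_powersetCard, Finset.card_erase_of_mem (Finset.mem_univ i),
    Finset.card_univ, Fintype.card_fin]

lemma countB {n b : ℕ} (hb : 2 ≤ b) {i j : Fin n} (hij : i ≠ j) :
    ((Finset.powersetCard b (Finset.univ : Finset (Fin n))).filter
        (fun S => i ∈ S ∧ j ∈ S)).card = (n - 2).choose (b - 2) := by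
  have h : ((Finset.powersetCard b (Finset.univ : Finset (Fin n))).filter
        (fun S => i ∈ S ∧ j ∈ S)).card
      = (Finset.powersetCard (b - 2) (((Finset.univ : Finset (Fin n)).erase i).erase j)).card := by
    refine Finset.card_bij' (fun S _ => (S.erase i).erase j) (fun T _ => insert i (insert j T))
      ?_ ?_ ?_ ?_
    · intro S hS
      simp only [Finset.mem_filter, Finset.mem_powersetCard] at hS
      rw [Finset.mem_powersetCard]
      constructor
      · intro x hx
        simp only [Finset.mem_erase] at hx ⊢
        exact ⟨hx.1, hx.2.1, Finset.mem_univ x⟩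
      · have h2 : 2 ≤ S.card := by
          refine Finset.one_lt_card.mpr ⟨i, hS.2.1, j, hS.2.2, hij⟩
        rw [Finset.card_erase_of_mem (Finset.mem_erase.mpr ⟨(Ne.symm hij), hS.2.2⟩),
          Finset.card_erase_of_mem hS.2.1, hS.1.2]
        omega
    · intro T hT
      rw [Finset.mem_powersetCard] at hT
      have hiT : i ∉ T := fun h => by
        have := hT.1 h; simp only [Finset.mem_erase] at this; exact this.2.1 rfl
      have hjT : j ∉ T := fun h => by
        have := hT.1 h; simp only [Finset.mem_erase] at this; exact this.1 rfl
      simp only [Finset.mem_filter, Finset.mem_powersetCard]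
      refine ⟨⟨Finset.subset_univ _, ?_⟩, Finset.mem_insert_self i _,
        Finset.mem_insert_of_mem (Finset.mem_insert_self j T)⟩
      rw [Finset.card_insert_of_notMem (by simp [hiT, hij]),
        Finset.card_insert_of_notMem hjT, hT.2]
      omega
    · intro S hS
      simp only [Finset.mem_filter] at hS
      rw [Finset.insert_erase (Finset.mem_erase.mpr ⟨Ne.symm hij, hS.2.2⟩)]
      exact Finset.insert_erase hS.2.1
    · intro T hT
      rw [Finset.mem_powersetCard] at hT
      have hiT : i ∉ T := fun h => by
        have := hT.1 h; simp only [Finset.mem_erase] at this; exact this.2.1 rfl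
      have hjT : j ∉ T := fun h => by
        have := hT.1 h; simp only [Finset.mem_erase] at this; exact this.1 rfl
      have hi' : i ∉ insert j T := by
        simp only [Finset.mem_insert]
        rintro (h | h)
        exacts [hij h, hiT h]
      rw [Finset.erase_insert hi', Finset.erase_insert hjT]
  rw [h, Finset.card_powersetCard]
  congr 1
  rw [Finset.card_erase_of_mem (Finset.mem_erase.mpr ⟨Ne.symm hij, Finset.mem_univ j⟩),
    Finset.card_erase_of_mem (Finset.mem_univ i), Finset.card_univ, Fintype.card_fin]
  omega

lemma countB1 {n : ℕ} {i j : Fin n} (hij : i ≠ j) :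
    ((Finset.powersetCard 1 (Finset.univ : Finset (Fin n))).filter
        (fun S => i ∈ S ∧ j ∈ S)).card = 0 := by
  rw [Finset.card_eq_zero, Finset.filter_eq_empty_iff]
  intro S hS
  rw [Finset.mem_powersetCard] at hS
  rintro ⟨hi, hj⟩
  have := Finset.one_lt_card.mpr ⟨i, hi, j, hj, hij⟩
  omega

lemma chooseId {n b : ℕ} (hn : 2 ≤ n) (hb1 : 1 ≤ b) :
    n.choose b * b * (n - b) = n * (n - 1) * (n - 2).choose (b - 1) := by
  obtain ⟨m, rfl⟩ : ∃ m, n = m + 2 := ⟨n - 2, by omega⟩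
  obtain ⟨k, rfl⟩ : ∃ k, b = k + 1 := ⟨b - 1, by omega⟩
  have h1 : (m + 2).choose (k + 1) * (k + 1) = (m + 2) * (m + 1).choose k := by
    have := Nat.add_one_mul_choose_eq (m + 1) k
    linarith
  have h2 : (m).choose k * (m + 1) = (m + 1).choose k * (m + 1 - k) := Nat.choose_mul_succ_eq m k
  have h3 : m + 2 - (k + 1) = m + 1 - k := by omega
  rw [h1, h3]
  simp only [Nat.add_sub_cancel]
  calc (m + 2) * (m + 1).choose k * (m + 1 - k) = (m + 2) * ((m + 1).choose k * (m + 1 - k)) := by ring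
    _ = (m + 2) * (m.choose k * (m + 1)) := by rw [h2]
    _ = (m + 2) * (m + 1) * m.choose k := by ring

section swaps
variable {n : ℕ}

lemma swap_single (P : Finset (Finset (Fin n))) (v : Fin n → ℝ) :
    ∑ S ∈ P, ∑ i ∈ S, v i
      = ∑ i, ((P.filter (fun S => i ∈ S)).card : ℝ) * v i := by
  have h1 : ∀ S ∈ P, ∑ i ∈ S, v i = ∑ i : Fin n, if i ∈ S then v i else 0 := by
    intro S _
    rw [Finset.sum_ite_mem, Finset.univ_inter]
  rw [Finset.sum_congr rfl h1, Finset.sum_comm]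
  refine Finset.sum_congr rfl fun i _ => ?_
  rw [Finset.sum_ite, Finset.sum_const, Finset.sum_const_zero, add_zero, nsmul_eq_mul]

lemma swap_pair (P : Finset (Finset (Fin n))) (a : Fin n → Fin n → ℝ) :
    ∑ S ∈ P, ∑ i ∈ S, ∑ j ∈ S.erase i, a i j
      = ∑ i, ∑ j ∈ Finset.univ.erase i,
          ((P.filter (fun S => i ∈ S ∧ j ∈ S)).card : ℝ) * a i j := by
  have h1 : ∀ S ∈ P, ∑ i ∈ S, ∑ j ∈ S.erase i, a i j
      = ∑ i : Fin n, ∑ j ∈ Finset.univ.erase i, if i ∈ S ∧ j ∈ S then a i j else 0 := by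
    intro S _
    have h2 : ∀ i, ∑ j ∈ S.erase i, a i j
        = ∑ j ∈ Finset.univ.erase i, if j ∈ S then a i j else 0 := by
      intro i
      rw [Finset.sum_ite_mem]
      congr 1
      ext j
      simp [Finset.mem_erase, Finset.mem_inter, and_comm]
    calc ∑ i ∈ S, ∑ j ∈ S.erase i, a i j
        = ∑ i : Fin n, if i ∈ S then ∑ j ∈ S.erase i, a i j else 0 := by
          rw [Finset.sum_ite_mem, Finset.univ_inter]
      _ = ∑ i : Fin n, ∑ j ∈ Finset.univ.erase i, if i ∈ S ∧ j ∈ S then a i j else 0 := by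
          refine Finset.sum_congr rfl fun i _ => ?_
          by_cases hi : i ∈ S
          · rw [if_pos hi, h2 i]
            refine Finset.sum_congr rfl fun j _ => ?_
            simp [hi]
          · rw [if_neg hi]
            symm
            refine Finset.sum_eq_zero fun j _ => ?_
            simp [hi]
  rw [Finset.sum_congr rfl h1, Finset.sum_comm]
  refine Finset.sum_congr rfl fun i _ => ?_
  rw [Finset.sum_comm]
  refine Finset.sum_congr rfl fun j _ => ?_
  rw [Finset.sum_ite, Finset.sum_const, Finset.sum_const_zero, add_zero, nsmul_eq_mul]

end swaps

variable {E : Type*} [NormedAddCommGroup E] [InnerProductSpace ℝ E]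

lemma variance {n b : ℕ} (hn : 2 ≤ n) (hb1 : 1 ≤ b) (hbn : b ≤ n) (η : Fin n → E)
    (hsum : ∑ i, η i = 0) :
    ∑ S ∈ Finset.powersetCard b (Finset.univ : Finset (Fin n)), ‖∑ i ∈ S, η i‖ ^ 2
      = ((n - 2).choose (b - 1) : ℝ) * ∑ i, ‖η i‖ ^ 2 := by
  classical
  set P := Finset.powersetCard b (Finset.univ : Finset (Fin n)) with hP
  have hexp : ∀ S : Finset (Fin n), ‖∑ i ∈ S, η i‖ ^ 2
      = (∑ i ∈ S, ‖η i‖ ^ 2) + ∑ i ∈ S, ∑ j ∈ S.erase i, ⟪η i, η j⟫ := by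
    intro S
    have h1 : ‖∑ i ∈ S, η i‖ ^ 2 = ∑ i ∈ S, ∑ j ∈ S, ⟪η i, η j⟫ := by
      rw [← real_inner_self_eq_norm_sq, sum_inner]
      exact Finset.sum_congr rfl fun i _ => inner_sum _ _ _
    rw [h1]
    have h3 : ∀ i ∈ S, ∑ j ∈ S, ⟪η i, η j⟫ = ‖η i‖ ^ 2 + ∑ j ∈ S.erase i, ⟪η i, η j⟫ := by
      intro i hi
      rw [← Finset.add_sum_erase _ _ hi, real_inner_self_eq_norm_sq]
    rw [Finset.sum_congr rfl h3, Finset.sum_add_distrib]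
  have hoff : ∑ i, ∑ j ∈ Finset.univ.erase i, ⟪η i, η j⟫ = - ∑ i, ‖η i‖ ^ 2 := by
    have : ∀ i : Fin n, ∑ j ∈ Finset.univ.erase i, ⟪η i, η j⟫ = - ‖η i‖ ^ 2 := by
      intro i
      have h0 : ⟪η i, η i⟫ + ∑ j ∈ Finset.univ.erase i, ⟪η i, η j⟫ = 0 := by
        rw [Finset.add_sum_erase Finset.univ (fun j => ⟪η i, η j⟫) (Finset.mem_univ i),
          ← inner_sum, hsum, inner_zero_right]
      have h2 : ⟪η i, η i⟫ = ‖η i‖ ^ 2 := real_inner_self_eq_norm_sq _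
      linarith
    rw [Finset.sum_congr rfl fun i _ => this i, Finset.sum_neg_distrib]
  have hc1 : ∀ i : Fin n, ((P.filter (fun S => i ∈ S)).card : ℝ) = ((n-1).choose (b-1) : ℝ) := by
    intro i
    rw [hP, countA hb1 i]
  have hc2 : ∀ i j : Fin n, i ≠ j → ((P.filter (fun S => i ∈ S ∧ j ∈ S)).card : ℝ)
      = ((n-1).choose (b-1) : ℝ) - ((n-2).choose (b-1) : ℝ) := by
    intro i j hij
    rcases eq_or_lt_of_le hb1 with hb | hb
    · obtain rfl : b = 1 := hb.symm
      rw [hP, countB1 hij]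
      norm_num
    · have hb2 : 2 ≤ b := hb
      rw [hP, countB hb2 hij]
      have : (n-1).choose (b-1) = (n-2).choose (b-2) + (n-2).choose (b-1) := by
        obtain ⟨m, rfl⟩ : ∃ m, n = m + 2 := ⟨n - 2, by omega⟩
        obtain ⟨k, rfl⟩ : ∃ k, b = k + 2 := ⟨b - 2, by omega⟩
        simp only [Nat.add_sub_cancel, show m + 2 - 1 = m + 1 by omega,
          show k + 2 - 1 = k + 1 by omega]
        exact Nat.choose_succ_succ' m k
      rw [this]
      push_cast
      ring
  calc ∑ S ∈ P, ‖∑ i ∈ S, η i‖ ^ 2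
      = (∑ S ∈ P, ∑ i ∈ S, ‖η i‖ ^ 2) + ∑ S ∈ P, ∑ i ∈ S, ∑ j ∈ S.erase i, ⟪η i, η j⟫ := by
        rw [← Finset.sum_add_distrib]
        exact Finset.sum_congr rfl fun S _ => hexp S
    _ = ((n-1).choose (b-1) : ℝ) * ∑ i, ‖η i‖ ^ 2
        + (((n-1).choose (b-1) : ℝ) - ((n-2).choose (b-1) : ℝ)) * ∑ i, ∑ j ∈ Finset.univ.erase i, ⟪η i, η j⟫ := by
        rw [swap_single, swap_pair, Finset.mul_sum]
        congr 1
        · exact Finset.sum_congr rfl fun i _ => by rw [hc1 i]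
        · rw [Finset.mul_sum]
          refine Finset.sum_congr rfl fun i _ => ?_
          rw [Finset.mul_sum]
          refine Finset.sum_congr rfl fun j hj => ?_
          rw [hc2 i j (Finset.ne_of_mem_erase hj).symm]
    _ = ((n - 2).choose (b - 1) : ℝ) * ∑ i, ‖η i‖ ^ 2 := by
        rw [hoff]
        ring

section Analysis
variable {E : Type*} [NormedAddCommGroup E] [InnerProductSpace ℝ E]
lemma sq_sub_le (a b : E) : ‖a - b‖ ^ 2 ≤ 2 * ‖a‖ ^ 2 + 2 * ‖b‖ ^ 2 := by
  have h1 := norm_sub_sq_real a b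
  have h2 := abs_real_inner_le_norm a b
  have h3 : -(‖a‖ * ‖b‖) ≤ ⟪a, b⟫ := neg_le_of_abs_le h2
  nlinarith [sq_nonneg (‖a‖ - ‖b‖), norm_nonneg a, norm_nonneg b]
end Analysis

variable {E : Type*} [NormedAddCommGroup E] [InnerProductSpace ℝ E] [CompleteSpace E]

lemma dirDeriv {f : E → ℝ} {g : E} {y v : E} (hf : HasGradientAt f g y) {t0 : ℝ} {x : E}
    (hx : y = x + t0 • v) :
    HasDerivAt (fun t : ℝ => f (x + t • v)) ⟪g, v⟫ t0 := by
  have h1 : HasDerivAt (fun t : ℝ => x + t • v) v t0 := by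
    simpa using ((hasDerivAt_id t0).smul_const v).const_add x
  have h2 := hf.hasFDerivAt
  rw [hx] at h2
  have := h2.comp_hasDerivAt t0 h1
  exact this

lemma slope_limit_le {φ : ℝ → ℝ} {D c : ℝ} (hD : HasDerivAt φ D 0)
    (h : ∀ t : ℝ, t ∈ Set.Ioo (0:ℝ) 1 → φ t - φ 0 ≤ t * c) : D ≤ c := by
  have htend : Filter.Tendsto (slope φ 0) (nhdsWithin 0 (Set.Ioi 0)) (nhds D) :=
    (hasDerivAt_iff_tendsto_slope.mp hD).mono_left
      (nhdsWithin_mono 0 (fun t ht => ne_of_gt ht))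
  refine le_of_tendsto htend ?_
  filter_upwards [Ioo_mem_nhdsGT_of_mem (by norm_num : (0:ℝ) ∈ Set.Ico (0:ℝ) 1)] with t ht
  have h0 : 0 < t := ht.1
  rw [slope_def_field, div_le_iff₀ (by simpa using h0)]
  simpa [mul_comm] using h t ht

lemma subgrad {f : E → ℝ} {g : E} (hconv : ConvexOn ℝ Set.univ f)
    (hg : HasGradientAt f g x) (z : E) : f x + ⟪g, z - x⟫ ≤ f z := by
  have hD : HasDerivAt (fun t : ℝ => f (x + t • (z - x))) ⟪g, z - x⟫ 0 :=
    dirDeriv hg (by simp)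
  have key : ⟪g, z - x⟫ ≤ f z - f x := by
    refine slope_limit_le hD ?_
    intro t ht
    have hc := hconv.2 (Set.mem_univ x) (Set.mem_univ z) (by linarith [ht.1, ht.2] : 0 ≤ 1 - t)
      (le_of_lt ht.1) (by ring)
    have hpt : (1 - t) • x + t • z = x + t • (z - x) := by
      simp [smul_sub, sub_smul]; abel
    rw [hpt] at hc
    simp only [smul_eq_mul] at hc
    simp only [zero_smul, add_zero]
    nlinarith [hc]
  linarith

lemma descent {f : E → ℝ} {g : E → E} (hg : ∀ x, HasGradientAt f (g x) x)
    {L : ℝ} (hL : 0 < L) (hlip : ∀ u v, ‖g u - g v‖ ≤ L * ‖u - v‖) (w z : E) :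
    f z ≤ f w + ⟪g w, z - w⟫ + L / 2 * ‖z - w‖ ^ 2 := by
  set u := z - w with hu
  set ψ : ℝ → ℝ := fun t => f (w + t • u) - t * ⟪g w, u⟫ - L / 2 * t ^ 2 * ‖u‖ ^ 2 with hψ
  have hderiv : ∀ t : ℝ, HasDerivAt ψ (⟪g (w + t • u), u⟫ - ⟪g w, u⟫ - L * t * ‖u‖ ^ 2) t := by
    intro t
    have h1 : HasDerivAt (fun s : ℝ => f (w + s • u)) ⟪g (w + t • u), u⟫ t :=
      dirDeriv (hg (w + t • u)) rfl
    have h2 : HasDerivAt (fun s : ℝ => s * ⟪g w, u⟫) ⟪g w, u⟫ t := by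
      simpa using (hasDerivAt_id t).mul_const ⟪g w, u⟫
    have h3 : HasDerivAt (fun s : ℝ => L / 2 * s ^ 2 * ‖u‖ ^ 2) (L * t * ‖u‖ ^ 2) t := by
      have := ((hasDerivAt_pow 2 t).const_mul (L / 2)).mul_const (‖u‖ ^ 2)
      exact this.congr_deriv (by rw [show (2:ℕ) - 1 = 1 from rfl]; push_cast; ring)
    exact (h1.sub h2).sub h3
  have hmono : ψ 1 ≤ ψ 0 := by
    have hcont : ContinuousOn ψ (Set.Icc 0 1) := fun t _ => (hderiv t).continuousAt.continuousWithinAt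
    have : AntitoneOn ψ (Set.Icc (0:ℝ) 1) := by
      refine antitoneOn_of_deriv_nonpos (convex_Icc 0 1) hcont
        (fun t ht => (hderiv t).differentiableAt.differentiableWithinAt) ?_
      intro t ht
      rw [interior_Icc] at ht
      rw [(hderiv t).deriv]
      have hb : ⟪g (w + t • u) - g w, u⟫ ≤ L * t * ‖u‖ ^ 2 := by
        calc ⟪g (w + t • u) - g w, u⟫ ≤ ‖g (w + t • u) - g w‖ * ‖u‖ := real_inner_le_norm _ _
          _ ≤ (L * ‖(w + t • u) - w‖) * ‖u‖ := by
              gcongr; exact hlip _ _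
          _ = L * t * ‖u‖ ^ 2 := by
              rw [add_sub_cancel_left, norm_smul, Real.norm_eq_abs, abs_of_pos ht.1]; ring
      rw [inner_sub_left] at hb
      linarith
    exact this (by norm_num) (by norm_num) (by norm_num)
  have h0 : ψ 0 = f w := by simp [hψ]
  have h1 : ψ 1 = f z - ⟪g w, u⟫ - L / 2 * ‖u‖ ^ 2 := by simp [hψ, hu]
  rw [h0, h1] at hmono
  linarith

lemma inner_gradient (c : E) (v : E) : HasGradientAt (fun x : E => ⟪c, x⟫) c v := by
  rw [hasGradientAt_iff_hasFDerivAt]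
  exact (InnerProductSpace.toDual ℝ E c).hasFDerivAt

lemma cocoercive {f : E → ℝ} {g : E → E} (hconv : ConvexOn ℝ Set.univ f)
    (hg : ∀ x, HasGradientAt f (g x) x)
    {L : ℝ} (hL : 0 < L) (hlip : ∀ u v, ‖g u - g v‖ ≤ L * ‖u - v‖) (w z : E) :
    ‖g z - g w‖ ^ 2 ≤ 2 * L * (f z - f w - ⟪g w, z - w⟫) := by
  set h : E → ℝ := fun v => f v - ⟪g w, v⟫ with hh
  have hgh : ∀ v, HasGradientAt h (g v - g w) v := by
    intro v
    rw [hasGradientAt_iff_hasFDerivAt, map_sub]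
    exact ((hg v).hasFDerivAt).sub ((inner_gradient (g w) v).hasFDerivAt)
  have hhconv : ConvexOn ℝ Set.univ h := by
    refine hconv.sub ⟨convex_univ, ?_⟩
    intro a _ c _ p q _ _ _
    simp [inner_add_right, inner_smul_right]
  have hmin : ∀ v, h w ≤ h v := by
    intro v
    have := subgrad hhconv (hgh w) v
    simpa using this
  set z' := z - (1 / L) • (g z - g w) with hz'
  have hdes := descent hgh hL (by intro u v; simpa using hlip u v) z z'
  have hnorm : ‖z' - z‖ ^ 2 = (1 / L) ^ 2 * ‖g z - g w‖ ^ 2 := by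
    rw [hz']
    simp only [sub_sub_cancel_left, norm_neg, norm_smul]
    rw [Real.norm_eq_abs, abs_of_pos (by positivity)]
    ring
  have hinner : ⟪g z - g w, z' - z⟫ = -(1 / L) * ‖g z - g w‖ ^ 2 := by
    rw [hz']
    simp only [sub_sub_cancel_left, inner_neg_right, inner_smul_right, real_inner_self_eq_norm_sq]
    ring
  have := hmin z'
  rw [hinner, hnorm] at hdes
  have : h w ≤ h z - 1 / (2 * L) * ‖g z - g w‖ ^ 2 := by
    refine le_trans (hmin z') (le_trans hdes ?_)
    have : (-(1 / L) * ‖g z - g w‖ ^ 2) + L / 2 * ((1 / L) ^ 2 * ‖g z - g w‖ ^ 2)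
        = - (1 / (2 * L) * ‖g z - g w‖ ^ 2) := by field_simp; ring
    linarith
  have hhz : h z - h w = f z - f w - ⟪g w, z - w⟫ := by
    simp [hh, inner_sub_right]; ring
  have hL' : 0 < 2 * L := by linarith
  rw [← hhz]
  have := (mul_le_mul_iff_right₀ hL').mpr (by linarith : 1 / (2 * L) * ‖g z - g w‖ ^ 2 ≤ h z - h w)
  calc ‖g z - g w‖ ^ 2 = 2 * L * (1 / (2 * L) * ‖g z - g w‖ ^ 2) := by field_simp
    _ ≤ 2 * L * (h z - h w) := this

lemma slope_limit_ge {φ : ℝ → ℝ} {D : ℝ} (hD : HasDerivAt φ D 0)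
    (h : ∀ t : ℝ, t ∈ Set.Ioo (0:ℝ) 1 → φ 0 ≤ φ t) : 0 ≤ D := by
  have htend : Filter.Tendsto (slope φ 0) (nhdsWithin 0 (Set.Ioi 0)) (nhds D) :=
    (hasDerivAt_iff_tendsto_slope.mp hD).mono_left
      (nhdsWithin_mono 0 (fun t ht => ne_of_gt ht))
  refine ge_of_tendsto htend ?_
  filter_upwards [Ioo_mem_nhdsGT_of_mem (by norm_num : (0:ℝ) ∈ Set.Ico (0:ℝ) 1)] with t ht
  rw [slope_def_field]
  have := h t ht
  have h0 : (0:ℝ) < t := ht.1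
  have : (0:ℝ) ≤ (φ t - φ 0) := by linarith
  have ht0 : (0:ℝ) < t - 0 := by simpa using h0
  positivity

lemma optimality {F : E → ℝ} {gF : E} {xstar : E} (hgF : HasGradientAt F gF xstar)
    {W : Set E} (hW : Convex ℝ W) (hxs : xstar ∈ W) (hmin : ∀ w ∈ W, F xstar ≤ F w)
    {w : E} (hw : w ∈ W) : 0 ≤ ⟪gF, w - xstar⟫ := by
  have hD : HasDerivAt (fun t : ℝ => F (xstar + t • (w - xstar))) ⟪gF, w - xstar⟫ 0 :=
    dirDeriv hgF (by simp)
  refine slope_limit_ge hD ?_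
  intro t ht
  simp only [zero_smul, add_zero]
  refine hmin _ ?_
  have := hW hxs hw (by linarith [ht.1, ht.2] : (0:ℝ) ≤ 1 - t) (le_of_lt ht.1) (by ring)
  have hpt : (1 - t) • xstar + t • w = xstar + t • (w - xstar) := by
    simp [smul_sub, sub_smul]; abel
  rwa [hpt] at this

end Lemmas

set_option maxHeartbeats 1600000 in
theorem stmt_11 {d n : ℕ} (hn : 2 ≤ n)
    (f : Fin n → EuclideanSpace ℝ (Fin d) → ℝ)
    (f' : Fin n → EuclideanSpace ℝ (Fin d) → EuclideanSpace ℝ (Fin d))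
    (hconv : ∀ i, ConvexOn ℝ Set.univ (f i))
    (hgrad : ∀ i x, HasGradientAt (f i) (f' i x) x)
    (L : ℝ) (hL : 0 < L)
    (hlip : ∀ i x y, ‖f' i x - f' i y‖ ≤ L * ‖x - y‖)
    (F : EuclideanSpace ℝ (Fin d) → ℝ)
    (hF : ∀ x, F x = (1 / (n : ℝ)) * ∑ i, f i x)
    (W : Set (EuclideanSpace ℝ (Fin d))) (hcl : IsClosed W) (hconvW : Convex ℝ W)
    (xstar : EuclideanSpace ℝ (Fin d)) (hxstar : xstar ∈ W)
    (hmin : ∀ w ∈ W, F xstar ≤ F w)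
    (y x : EuclideanSpace ℝ (Fin d)) (hy : y ∈ W) (hx : x ∈ W)
    (b : ℕ) (hb1 : 1 ≤ b) (hbn : b ≤ n)
    (α : ℝ) (hα : α = ((n : ℝ) - b) / ((b : ℝ) * ((n : ℝ) - 1))) :
    (1 / (n.choose b : ℝ)) *
      ∑ S ∈ Finset.powersetCard b (Finset.univ : Finset (Fin n)),
        ‖((1 / (n : ℝ)) • ∑ i, f' i x
            + (1 / (b : ℝ)) • ∑ i ∈ S, (f' i y - f' i x))
          - (1 / (n : ℝ)) • ∑ i, f' i y‖ ^ 2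
    ≤ α * (4 * L) * ((F y - F xstar) + (F x - F xstar)) := by
  have hn0 : ((n : ℝ)) ≠ 0 := Nat.cast_ne_zero.mpr (by omega)
  have hb0 : ((b : ℝ)) ≠ 0 := Nat.cast_ne_zero.mpr (by omega)
  set ξ : Fin n → EuclideanSpace ℝ (Fin d) := fun i => f' i y - f' i x with hξ
  set μ : EuclideanSpace ℝ (Fin d) := (1 / (n : ℝ)) • ∑ i, ξ i with hμ
  set η : Fin n → EuclideanSpace ℝ (Fin d) := fun i => ξ i - μ with hη
  have hnμ : (n : ℝ) • μ = ∑ i, ξ i := by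
    rw [hμ, smul_smul]
    rw [mul_one_div, div_self hn0, one_smul]
  have hsumη : ∑ i, η i = 0 := by
    simp only [hη, Finset.sum_sub_distrib, Finset.sum_const, Finset.card_univ,
      Fintype.card_fin, ← hnμ, ← Nat.cast_smul_eq_nsmul ℝ]
    abel
  -- rewrite each summand
  have hterm : ∀ S ∈ Finset.powersetCard b (Finset.univ : Finset (Fin n)),
      ‖((1 / (n : ℝ)) • ∑ i, f' i x + (1 / (b : ℝ)) • ∑ i ∈ S, (f' i y - f' i x))
          - (1 / (n : ℝ)) • ∑ i, f' i y‖ ^ 2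
        = (1 / (b : ℝ)) ^ 2 * ‖∑ i ∈ S, η i‖ ^ 2 := by
    intro S hS
    rw [Finset.mem_powersetCard] at hS
    have hcard : (S.card : ℝ) = b := by exact_mod_cast hS.2
    have hμ' : μ = (1 / (n : ℝ)) • ∑ i, f' i y - (1 / (n : ℝ)) • ∑ i, f' i x := by
      rw [hμ, hξ, Finset.sum_sub_distrib, smul_sub]
    have hsum : ∑ i ∈ S, η i = ∑ i ∈ S, ξ i - (b : ℝ) • μ := by
      rw [hη]
      simp only
      rw [Finset.sum_sub_distrib, Finset.sum_const, ← hcard, ← Nat.cast_smul_eq_nsmul ℝ]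
    have heq : ((1 / (n : ℝ)) • ∑ i, f' i x + (1 / (b : ℝ)) • ∑ i ∈ S, (f' i y - f' i x))
          - (1 / (n : ℝ)) • ∑ i, f' i y = (1 / (b : ℝ)) • ∑ i ∈ S, η i := by
      rw [hsum, smul_sub, smul_smul, one_div_mul_cancel hb0, one_smul, hμ']
      abel
    rw [heq, norm_smul]
    rw [Real.norm_eq_abs, abs_of_nonneg (by positivity)]
    ring
  rw [Finset.sum_congr rfl hterm]
  -- coefficient computation
  have hCpos : (0 : ℝ) < (n.choose b : ℝ) := by exact_mod_cast Nat.choose_pos hbn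
  have hid : ((n.choose b : ℝ)) * b * ((n : ℝ) - b) = (n : ℝ) * ((n : ℝ) - 1) * ((n - 2).choose (b - 1) : ℝ) := by
    have := chooseId hn hb1
    have hcast : ((n.choose b * b * (n - b) : ℕ) : ℝ) = ((n * (n - 1) * (n - 2).choose (b - 1) : ℕ) : ℝ) := by
      exact congrArg (Nat.cast : ℕ → ℝ) this
    push_cast [Nat.cast_sub hbn, Nat.cast_sub (by omega : 1 ≤ n)] at hcast
    convert hcast using 2 <;> push_cast <;> ring
  have hn1 : (n : ℝ) - 1 ≠ 0 := by
    have : (2 : ℝ) ≤ (n : ℝ) := by exact_mod_cast hn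
    linarith
  have hcoef : (1 / (n.choose b : ℝ)) * ((1 / (b : ℝ)) ^ 2 * ((n - 2).choose (b - 1) : ℝ)) = α / n := by
    rw [hα]
    field_simp
    nlinarith [hid, hCpos]
  -- bound sum of ‖η‖² by sum of ‖ξ‖²
  have hQ : ∑ i, ‖η i‖ ^ 2 ≤ ∑ i, ‖ξ i‖ ^ 2 := by
    have hterm2 : ∀ i : Fin n, ‖η i‖ ^ 2 = ‖ξ i‖ ^ 2 - 2 * ⟪ξ i, μ⟫ + ‖μ‖ ^ 2 := by
      intro i
      rw [hη]
      exact norm_sub_sq_real _ _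
    rw [Finset.sum_congr rfl (fun i _ => hterm2 i)]
    have hin : ∑ i, ⟪ξ i, μ⟫ = (n : ℝ) * ‖μ‖ ^ 2 := by
      rw [← sum_inner, ← hnμ, real_inner_smul_left, real_inner_self_eq_norm_sq]
    have hμ0 : 0 ≤ ‖μ‖ ^ 2 := by positivity
    have hn2 : (2 : ℝ) ≤ (n : ℝ) := by exact_mod_cast hn
    have hexpand : ∑ i, (‖ξ i‖ ^ 2 - 2 * ⟪ξ i, μ⟫ + ‖μ‖ ^ 2)
        = ∑ i, ‖ξ i‖ ^ 2 - (n:ℝ) * ‖μ‖ ^ 2 := by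
      rw [Finset.sum_add_distrib, Finset.sum_sub_distrib]
      rw [Finset.sum_const, Finset.card_univ, Fintype.card_fin, nsmul_eq_mul]
      rw [← Finset.mul_sum, hin]
      ring
    rw [hexpand]
    nlinarith
  -- cocoercivity bound
  have hgradF : ∀ w : EuclideanSpace ℝ (Fin d),
      HasGradientAt F ((1 / (n : ℝ)) • ∑ i, f' i w) w := by
    intro w
    have hFeq : F = fun z => (1 / (n : ℝ)) * ∑ i, f i z := funext hF
    rw [hFeq, hasGradientAt_iff_hasFDerivAt, map_smul, map_sum]
    have hs : HasFDerivAt (fun z => ∑ i, f i z)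
        (∑ i, InnerProductSpace.toDual ℝ _ ((f' i w))) w :=
      HasFDerivAt.fun_sum (fun i _ => (hgrad i w).hasFDerivAt)
    exact hs.const_mul _
  have hnpos : (0:ℝ) < 1 / (n:ℝ) := by
    have : (0:ℝ) < (n:ℝ) := by exact_mod_cast (by omega : 0 < n)
    positivity
  have hopty : 0 ≤ ⟪∑ i, f' i xstar, y - xstar⟫ := by
    have h := optimality (hgradF xstar) hconvW hxstar hmin hy
    rw [real_inner_smul_left] at h
    exact (mul_nonneg_iff_of_pos_left hnpos).mp h
  have hoptx : 0 ≤ ⟪∑ i, f' i xstar, x - xstar⟫ := by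
    have h := optimality (hgradF xstar) hconvW hxstar hmin hx
    rw [real_inner_smul_left] at h
    exact (mul_nonneg_iff_of_pos_left hnpos).mp h
  have hkey : ∀ w ∈ W, 0 ≤ ⟪∑ i, f' i xstar, w - xstar⟫ →
      ∑ i, ‖f' i w - f' i xstar‖ ^ 2 ≤ 2 * L * (n : ℝ) * (F w - F xstar) := by
    intro w hw hge
    have hco : ∀ i : Fin n, ‖f' i w - f' i xstar‖ ^ 2
        ≤ 2 * L * (f i w - f i xstar - ⟪f' i xstar, w - xstar⟫) := by
      intro i
      exact cocoercive (hconv i) (hgrad i) hL (hlip i) xstar w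
    calc ∑ i, ‖f' i w - f' i xstar‖ ^ 2
        ≤ ∑ i, 2 * L * (f i w - f i xstar - ⟪f' i xstar, w - xstar⟫) :=
          Finset.sum_le_sum (fun i _ => hco i)
      _ = 2 * L * (∑ i, f i w - ∑ i, f i xstar - ⟪∑ i, f' i xstar, w - xstar⟫) := by
          rw [← Finset.mul_sum]
          congr 1
          rw [sum_inner, ← Finset.sum_sub_distrib, ← Finset.sum_sub_distrib]
      _ ≤ 2 * L * (∑ i, f i w - ∑ i, f i xstar) := by
          nlinarith
      _ = 2 * L * (n : ℝ) * (F w - F xstar) := by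
          rw [hF w, hF xstar]
          field_simp
  have hky := hkey y hy hopty
  have hkx := hkey x hx hoptx
  have hξsq : ∀ i : Fin n, ‖ξ i‖ ^ 2 ≤ 2 * ‖f' i y - f' i xstar‖ ^ 2 + 2 * ‖f' i x - f' i xstar‖ ^ 2 := by
    intro i
    have : ξ i = (f' i y - f' i xstar) - (f' i x - f' i xstar) := by rw [hξ]; simp only; abel
    rw [this]
    exact sq_sub_le _ _
  have hξQ : ∑ i, ‖ξ i‖ ^ 2 ≤ 2 * (2 * L * (n : ℝ) * (F y - F xstar)) + 2 * (2 * L * (n : ℝ) * (F x - F xstar)) := by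
    calc ∑ i, ‖ξ i‖ ^ 2 ≤ ∑ i, (2 * ‖f' i y - f' i xstar‖ ^ 2 + 2 * ‖f' i x - f' i xstar‖ ^ 2) :=
          Finset.sum_le_sum (fun i _ => hξsq i)
      _ = 2 * ∑ i, ‖f' i y - f' i xstar‖ ^ 2 + 2 * ∑ i, ‖f' i x - f' i xstar‖ ^ 2 := by
          rw [Finset.sum_add_distrib, Finset.mul_sum, Finset.mul_sum]
      _ ≤ _ := by nlinarith
  have hα0 : 0 ≤ α := by
    rw [hα]
    have h1 : (b : ℝ) ≤ (n : ℝ) := by exact_mod_cast hbn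
    have h2 : (1 : ℝ) ≤ (b : ℝ) := by exact_mod_cast hb1
    have h3 : (2 : ℝ) ≤ (n : ℝ) := by exact_mod_cast hn
    apply div_nonneg <;> nlinarith
  calc (1 / (n.choose b : ℝ)) * ∑ S ∈ Finset.powersetCard b (Finset.univ : Finset (Fin n)),
        (1 / (b : ℝ)) ^ 2 * ‖∑ i ∈ S, η i‖ ^ 2
      = (1 / (n.choose b : ℝ)) * ((1 / (b : ℝ)) ^ 2 * (((n - 2).choose (b - 1) : ℝ) * ∑ i, ‖η i‖ ^ 2)) := by
        rw [← Finset.mul_sum, variance hn hb1 hbn η hsumη]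
    _ = (α / n) * ∑ i, ‖η i‖ ^ 2 := by rw [← hcoef]; ring
    _ ≤ (α / n) * (2 * (2 * L * (n : ℝ) * (F y - F xstar)) + 2 * (2 * L * (n : ℝ) * (F x - F xstar))) := by
        have h0 : 0 ≤ α / (n : ℝ) := by positivity
        have := le_trans hQ hξQ
        exact mul_le_mul_of_nonneg_left this h0
    _ = α * (4 * L) * ((F y - F xstar) + (F x - F xstar)) := by
        field_simp
        ring
end

section
/- Let F : ℝ^d → ℝ be convex and differentiable with L-Lipschitz gradient, W closed convex, x* ∈ W, y ∈ W, G ∈ ℝ^d, h ∈ (0, 1/L]. Define y⁺ = proj_W(y − hG), d = (1/h)(y − y⁺), and Δ = G − ∇F(y). Then F(x*) ≥ F(y⁺) + (h/2)‖d‖² + dᵀ(x* − y) − Δᵀ(x* − y⁺). -/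
set_option maxHeartbeats 1000000

open RealInnerProductSpace

section Aux

variable {d : ℕ}

local notation "E" => EuclideanSpace ℝ (Fin d)

lemma lineHasDerivAt (F : E → ℝ) (F'v : E) (a v : E) (t : ℝ)
    (hg : HasGradientAt F F'v (a + t • v)) :
    HasDerivAt (fun s : ℝ => F (a + s • v)) ⟪F'v, v⟫ t := by
  have hline : HasDerivAt (fun s : ℝ => a + s • v) v t := by
    simpa using ((hasDerivAt_id t).smul_const v).const_add a
  have := hg.hasFDerivAt.comp_hasDerivAt t hline
  simp [InnerProductSpace.toDual_apply_apply] at this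
  exact this

lemma grad_ineq (F : E → ℝ) (hconv : ConvexOn ℝ Set.univ F)
    (F'y : E) (y : E) (hg : HasGradientAt F F'y y) (x : E) :
    F y + ⟪F'y, x - y⟫ ≤ F x := by
  set v := x - y with hv
  have hder : HasDerivAt (fun s : ℝ => F (y + s • v)) ⟪F'y, v⟫ 0 := by
    apply lineHasDerivAt (d := d) F F'y y v 0
    simpa using hg
  have htend : Filter.Tendsto (fun t : ℝ => t⁻¹ * (F (y + t • v) - F y))
      (nhdsWithin 0 (Set.Ioi 0)) (nhds ⟪F'y, v⟫) := by
    have := hder.tendsto_slope_zero_right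
    simpa [slope_def_field, div_eq_inv_mul] using this
  have hbound : ∀ᶠ t : ℝ in nhdsWithin 0 (Set.Ioi 0),
      t⁻¹ * (F (y + t • v) - F y) ≤ F x - F y := by
    filter_upwards [Ioc_mem_nhdsGT_of_mem (Set.mem_Ico.mpr ⟨le_refl 0, one_pos⟩)] with t ht
    obtain ⟨ht0, ht1⟩ := ht
    have hmem : y + t • v = (1 - t) • y + t • x := by
      rw [hv]; module
    have := hconv.2 (Set.mem_univ y) (Set.mem_univ x)
      (by linarith : (0:ℝ) ≤ 1 - t) ht0.le (by ring)
    rw [← hmem] at this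
    rw [inv_mul_le_iff₀ ht0]
    simp only [smul_eq_mul] at this
    nlinarith
  have := le_of_tendsto htend hbound
  linarith

lemma descent_lemma (F : E → ℝ) (F' : E → E)
    (hgrad : ∀ x, HasGradientAt F (F' x) x)
    (L : ℝ) (hL : 0 ≤ L) (hlip : ∀ x y, ‖F' x - F' y‖ ≤ L * ‖x - y‖)
    (a b : E) :
    F b ≤ F a + ⟪F' a, b - a⟫ + L / 2 * ‖b - a‖ ^ 2 := by
  set v := b - a with hv
  have hder : ∀ t : ℝ, HasDerivAt (fun s : ℝ => F (a + s • v)) ⟪F' (a + t • v), v⟫ t :=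
    fun t => lineHasDerivAt F _ a v t (hgrad _)
  have hcontF' : Continuous F' := by
    rw [Metric.continuous_iff]
    intro x ε hε
    rcases eq_or_lt_of_le hL with hL0 | hLpos
    · exact ⟨1, one_pos, fun y _ => by
        have := hlip y x
        rw [← hL0] at this
        simp only [zero_mul] at this
        have : F' y = F' x := by
          rwa [← sub_eq_zero, ← norm_le_zero_iff ]
        simpa [dist_eq_norm, this] using hε⟩
    · refine ⟨ε / L, by positivity, fun y hy => ?_⟩
      rw [dist_eq_norm]
      calc ‖F' y - F' x‖ ≤ L * ‖y - x‖ := hlip y x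
        _ < L * (ε / L) := by
            apply mul_lt_mul_of_pos_left _ hLpos
            rwa [dist_eq_norm] at hy
        _ = ε := by field_simp
  have hcontφ' : Continuous fun t : ℝ => ⟪F' (a + t • v), v⟫ := by
    apply Continuous.inner
    · exact hcontF'.comp (by continuity)
    · exact continuous_const
  have hFTC : (∫ t in (0:ℝ)..1, ⟪F' (a + t • v), v⟫) = F b - F a := by
    have := intervalIntegral.integral_eq_sub_of_hasDerivAt
      (f := fun s : ℝ => F (a + s • v))
      (fun t _ => hder t) (hcontφ'.intervalIntegrable 0 1)
    rw [this]
    simp [hv]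
  have hbound : ∀ t ∈ Set.Icc (0:ℝ) 1,
      ⟪F' (a + t • v), v⟫ ≤ ⟪F' a, v⟫ + L * t * ‖v‖ ^ 2 := by
    intro t ht
    have h1 : ⟪F' (a + t • v), v⟫ - ⟪F' a, v⟫ = ⟪F' (a + t • v) - F' a, v⟫ := by
      rw [inner_sub_left]
    have h2 : ⟪F' (a + t • v) - F' a, v⟫ ≤ ‖F' (a + t • v) - F' a‖ * ‖v‖ :=
      real_inner_le_norm _ _
    have h3 : ‖F' (a + t • v) - F' a‖ ≤ L * (t * ‖v‖) := by
      have := hlip (a + t • v) a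
      simpa [norm_smul, abs_of_nonneg ht.1] using this
    have h4 : ‖F' (a + t • v) - F' a‖ * ‖v‖ ≤ L * (t * ‖v‖) * ‖v‖ :=
      mul_le_mul_of_nonneg_right h3 (norm_nonneg _)
    nlinarith [norm_nonneg v]
  have hint : (∫ t in (0:ℝ)..1, ⟪F' (a + t • v), v⟫)
      ≤ ∫ t in (0:ℝ)..1, (⟪F' a, v⟫ + L * t * ‖v‖ ^ 2) := by
    apply intervalIntegral.integral_mono_on zero_le_one
      (hcontφ'.intervalIntegrable 0 1)
      ((by continuity : Continuous fun t : ℝ => ⟪F' a, v⟫ + L * t * ‖v‖ ^ 2).intervalIntegrable 0 1)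
    exact hbound
  have hval : (∫ t in (0:ℝ)..1, (⟪F' a, v⟫ + L * t * ‖v‖ ^ 2)) = ⟪F' a, v⟫ + L / 2 * ‖v‖ ^ 2 := by
    rw [intervalIntegral.integral_add (intervalIntegrable_const)
      (((intervalIntegral.intervalIntegrable_id).const_mul L).mul_const (‖v‖ ^ 2))]
    have hfun : ∀ t : ℝ, L * t * ‖v‖ ^ 2 = (L * ‖v‖ ^ 2) * t := fun t => by ring
    simp_rw [hfun]
    rw [intervalIntegral.integral_const_mul, integral_id, intervalIntegral.integral_const]
    simp
    ring
  rw [hFTC] at hint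
  rw [hval] at hint
  linarith

lemma proj_vi (W : Set E) (hconvW : Convex ℝ W)
    (P : E → E) (hP : ∀ z, P z ∈ W ∧ ∀ w ∈ W, ‖P z - z‖ ≤ ‖w - z‖)
    (z : E) (w : E) (hw : w ∈ W) : ⟪z - P z, w - P z⟫ ≤ 0 := by
  set v := P z with hv
  by_contra hc
  push_neg at hc
  set c := ⟪z - v, w - v⟫ with hcdef
  have hq0 : (0:ℝ) < ‖w - v‖ ^ 2 := by
    rcases eq_or_ne w v with rfl | hne
    · simp [hcdef] at hc
    · exact pow_pos (norm_pos_iff.mpr (sub_ne_zero.mpr hne)) 2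
  set q := ‖w - v‖ ^ 2 with hqdef
  set t := min 1 (c / q) with ht
  have ht0 : 0 < t := lt_min one_pos (div_pos hc hq0)
  have ht1 : t ≤ 1 := min_le_left _ _
  have htcq : t ≤ c / q := min_le_right _ _
  have hmem : v + t • (w - v) ∈ W := by
    have := hconvW (hP z).1 hw (by linarith : (0:ℝ) ≤ 1 - t) ht0.le (by ring)
    convert this using 1
    module
  have hle : ‖v - z‖ ≤ ‖v + t • (w - v) - z‖ := (hP z).2 _ hmem
  have hexp : ‖v + t • (w - v) - z‖ ^ 2
      = ‖v - z‖ ^ 2 + 2 * (t * ⟪v - z, w - v⟫) + t ^ 2 * q := by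
    have hrw : v + t • (w - v) - z = (v - z) + t • (w - v) := by abel
    rw [hrw, norm_add_sq_real, real_inner_smul_right, norm_smul, Real.norm_eq_abs,
      mul_pow, sq_abs, hqdef]
  have hsq : ‖v - z‖ ^ 2 ≤ ‖v + t • (w - v) - z‖ ^ 2 :=
    pow_le_pow_left₀ (norm_nonneg _) hle 2
  have hinner : ⟪v - z, w - v⟫ = -c := by
    rw [hcdef, ← inner_neg_left]
    congr 1
    abel
  rw [hexp, hinner] at hsq
  have htq : t * q ≤ c := by
    rw [← le_div_iff₀ hq0]
    exact htcq
  nlinarith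
end Aux

theorem stmt_13 {d : ℕ} (F : EuclideanSpace ℝ (Fin d) → ℝ)
    (F' : EuclideanSpace ℝ (Fin d) → EuclideanSpace ℝ (Fin d))
    (hconv : ConvexOn ℝ Set.univ F)
    (hgrad : ∀ x, HasGradientAt F (F' x) x)
    (L : ℝ) (hL : 0 < L)
    (hlip : ∀ x y, ‖F' x - F' y‖ ≤ L * ‖x - y‖)
    (W : Set (EuclideanSpace ℝ (Fin d)))
    (hne : W.Nonempty) (hcl : IsClosed W) (hconvW : Convex ℝ W)
    (P : EuclideanSpace ℝ (Fin d) → EuclideanSpace ℝ (Fin d))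
    (hP : ∀ z, P z ∈ W ∧ ∀ w ∈ W, ‖P z - z‖ ≤ ‖w - z‖)
    (xstar y : EuclideanSpace ℝ (Fin d)) (hxstar : xstar ∈ W) (hy : y ∈ W)
    (G : EuclideanSpace ℝ (Fin d))
    (h : ℝ) (hh0 : 0 < h) (hhL : h ≤ 1 / L)
    (yplus dvec Δ : EuclideanSpace ℝ (Fin d))
    (hyplus : yplus = P (y - h • G))
    (hdvec : dvec = (1 / h) • (y - yplus))
    (hΔ : Δ = G - F' y) :
    F xstar ≥ F yplus + (h / 2) * ‖dvec‖ ^ 2 + ⟪dvec, xstar - y⟫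
      - ⟪Δ, xstar - yplus⟫ := by
  have hyd : y - yplus = h • dvec := by
    rw [hdvec, smul_smul, mul_one_div, div_self hh0.ne', one_smul]
  -- descent lemma
  have h1 : F yplus ≤ F y + ⟪F' y, yplus - y⟫ + L / 2 * ‖yplus - y‖ ^ 2 :=
    descent_lemma F F' hgrad L hL.le hlip y yplus
  -- convexity
  have h2 : F y + ⟪F' y, xstar - y⟫ ≤ F xstar :=
    grad_ineq F hconv (F' y) y (hgrad y) xstar
  -- projection variational inequality
  have h3 : ⟪(y - h • G) - yplus, xstar - yplus⟫ ≤ 0 := by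
    rw [hyplus]
    exact proj_vi W hconvW P hP (y - h • G) xstar hxstar
  -- rewrite h3
  have h3' : ⟪dvec, xstar - yplus⟫ - ⟪G, xstar - yplus⟫ ≤ 0 := by
    have he : (y - h • G) - yplus = h • (dvec - G) := by
      rw [smul_sub, ← hyd]; abel
    rw [he, real_inner_smul_left] at h3
    have hfac : ⟪dvec - G, xstar - yplus⟫ ≤ 0 := by
      by_contra hcon
      push_neg at hcon
      nlinarith
    rwa [inner_sub_left] at hfac
  -- algebraic identities
  have e1 : ⟪F' y, xstar - y⟫ - ⟪F' y, yplus - y⟫ = ⟪F' y, xstar - yplus⟫ := by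
    rw [← inner_sub_right]
    congr 1
    abel
  have hF'y : F' y = G - Δ := by rw [hΔ]; abel
  have e2 : ⟪F' y, xstar - yplus⟫ = ⟪G, xstar - yplus⟫ - ⟪Δ, xstar - yplus⟫ := by
    rw [hF'y, inner_sub_left]
  have e4 : ⟪dvec, xstar - yplus⟫ = ⟪dvec, xstar - y⟫ + h * ‖dvec‖ ^ 2 := by
    have : xstar - yplus = (xstar - y) + (y - yplus) := by abel
    rw [this, inner_add_right, hyd, real_inner_smul_right, real_inner_self_eq_norm_sq]
  have e5 : ‖yplus - y‖ ^ 2 = h ^ 2 * ‖dvec‖ ^ 2 := by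
    rw [norm_sub_rev, hyd, norm_smul, Real.norm_eq_abs, abs_of_pos hh0, mul_pow]
  have hLh : h * L ≤ 1 := (le_div_iff₀ hL).mp hhL
  have hnn : (0:ℝ) ≤ ‖dvec‖ ^ 2 := sq_nonneg _
  nlinarith [mul_le_mul_of_nonneg_left (mul_le_mul_of_nonneg_right hLh hnn) hh0.le]
end
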